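/- arXiv:2202.07851 — 5 statements merged into one kernel-verified Lean document; each statement's English description precedes it below -/
import Mathlib

section
/- Let p > 1 be a real number and let η : (0,∞) → [0,∞) be a nonincreasing function. Then (∫₀^∞ η(t)^{1/p} dt)^p ≥ p · ∫₀^∞ η(t) t^{p-1} dt. -/
open MeasureTheory Set Filter
open scoped ENNReal

/-- **Hardy–Littlewood–Pólya inequality.**
If `p > 1` and `η : (0,∞) → [0,∞)` is nonincreasing, then
`(∫₀^∞ η(t)^{1/p} dt)^p ≥ p · ∫₀^∞ η(t) t^{p-1} dt`,
where all integrals are Lebesgue integrals over `(0,∞)` taken in `ℝ≥0∞`. -/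
theorem hardy_littlewood_polya
    (p : ℝ) (hp : 1 < p)
    (η : ℝ → ℝ)
    (hη_nonneg : ∀ t ∈ Set.Ioi (0 : ℝ), 0 ≤ η t)
    (hη_anti : AntitoneOn η (Set.Ioi (0 : ℝ))) :
    ENNReal.ofReal p * ∫⁻ t in Set.Ioi (0 : ℝ), ENNReal.ofReal (η t * t ^ (p - 1)) ≤
      (∫⁻ t in Set.Ioi (0 : ℝ), ENNReal.ofReal (η t ^ (1 / p))) ^ p := by
  have hp0 : (0:ℝ) < p := by linarith
  have hp1 : (0:ℝ) < p - 1 := by linarith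
  set g : ℝ → ℝ≥0∞ := (Set.Ioi (0:ℝ)).indicator (fun t => ENNReal.ofReal (η t ^ (1 / p)))
    with hg_def
  -- g is antitone on (0,∞)
  have hg_anti : ∀ s ∈ Set.Ioi (0:ℝ), ∀ t ∈ Set.Ioi (0:ℝ), s ≤ t → g t ≤ g s := by
    intro s hs t ht hst
    rw [hg_def]
    simp only [Set.indicator_of_mem hs, Set.indicator_of_mem ht]
    exact ENNReal.ofReal_le_ofReal
      (Real.rpow_le_rpow (hη_nonneg t ht) (hη_anti hs ht hst) (by positivity))
  -- g is measurable
  have hg_meas : Measurable g := by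
    apply measurable_of_Ioi
    intro c
    have hset : g ⁻¹' Set.Ioi c = {t | 0 < t ∧ c < g t} := by
      ext t
      simp only [Set.mem_preimage, Set.mem_Ioi, Set.mem_setOf_eq]
      constructor
      · intro h
        by_cases ht : (0:ℝ) < t
        · exact ⟨ht, h⟩
        · rw [hg_def, Set.indicator_of_notMem (by simpa using ht)] at h
          simp at h
      · exact fun h => h.2
    rw [hset]
    apply Set.OrdConnected.measurableSet
    constructor
    intro x hx z hz y hy
    have hy0 : (0:ℝ) < y := lt_of_lt_of_le hx.1 hy.1
    have hz0 : (0:ℝ) < z := lt_of_lt_of_le hy0 hy.2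
    exact ⟨hy0, lt_of_lt_of_le hz.2 (hg_anti y hy0 z hz0 hy.2)⟩
  set ν : Measure ℝ := volume.withDensity g with hν_def
  set A : ℝ≥0∞ := ν (Set.Ioi (0:ℝ)) with hA_def
  have base_eq : ∫⁻ t in Set.Ioi (0:ℝ), ENNReal.ofReal (η t ^ (1 / p)) = A := by
    rw [hA_def, hν_def, withDensity_apply g measurableSet_Ioi]
    exact setLIntegral_congr_fun measurableSet_Ioi
      (fun t ht => (Set.indicator_of_mem ht (fun t => ENNReal.ofReal (η t ^ (1 / p)))).symm)
  rw [base_eq]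
  by_cases hA : A = ⊤
  · rw [hA, ENNReal.top_rpow_of_pos hp0]
    exact le_top
  -- now the finite case
  set F : ℝ → ℝ≥0∞ := fun t => ν (Set.Ioc 0 t) with hF_def
  have hF_le : ∀ t, F t ≤ A := fun t => measure_mono Set.Ioc_subset_Ioi_self
  have hF_ne_top : ∀ t, F t ≠ ⊤ := fun t => ne_top_of_le_ne_top hA (hF_le t)
  have hF_mono : Monotone F := fun a b hab => measure_mono (Set.Ioc_subset_Ioc_right hab)
  set f : ℝ → ℝ := fun t => (F t).toReal with hf_def
  have hf_mono : Monotone f := fun a b hab => ENNReal.toReal_mono (hF_ne_top b) (hF_mono hab)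
  have hf_meas : Measurable f := hf_mono.measurable
  have hν_atom : ∀ x : ℝ, ν {x} = 0 := fun x =>
    (withDensity_absolutelyContinuous volume g) (by simp)
  -- tail bound
  have tail : ∀ s : ℝ, 0 < s → ν {a | s < f a} ≤ A - ENNReal.ofReal s := by
    intro s hs
    by_cases hS : {x : ℝ | s < f x}.Nonempty
    · have hS_pos : ∀ x ∈ {x : ℝ | s < f x}, (0:ℝ) < x := by
        intro x hx
        by_contra h
        push_neg at h
        have hx0 : F x = 0 := by
          show ν (Set.Ioc 0 x) = 0
          rw [Set.Ioc_eq_empty (not_lt.mpr h)]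
          exact measure_empty
        have hfx : f x = 0 := by show (F x).toReal = 0; rw [hx0]; simp
        have hsx : s < f x := hx
        rw [hfx] at hsx
        linarith
      have hbdd : BddBelow {x : ℝ | s < f x} := ⟨0, fun x hx => (hS_pos x hx).le⟩
      set t₀ := sInf {x : ℝ | s < f x} with ht₀
      have ht₀0 : 0 ≤ t₀ := le_csInf hS fun x hx => (hS_pos x hx).le
      have hsub : {x : ℝ | s < f x} ⊆ Set.Ici t₀ := fun x hx => csInf_le hbdd hx
      have hνS : ν {x : ℝ | s < f x} ≤ ν (Set.Ioi t₀) := by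
        refine le_trans (measure_mono hsub) ?_
        have hIci : Set.Ici t₀ = {t₀} ∪ Set.Ioi t₀ := by
          rw [← Set.Ioi_insert, Set.insert_eq]
        calc ν (Set.Ici t₀) ≤ ν {t₀} + ν (Set.Ioi t₀) := hIci ▸ measure_union_le _ _
          _ = ν (Set.Ioi t₀) := by rw [hν_atom, zero_add]
      have hFs : ENNReal.ofReal s ≤ F t₀ := by
        have key : ∀ u, t₀ < u → ENNReal.ofReal s ≤ F u := by
          intro u hu
          obtain ⟨x, hxS, hxu⟩ := exists_lt_of_csInf_lt hS hu
          have h1 : s < f u := lt_of_lt_of_le hxS (hf_mono hxu.le)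
          calc ENNReal.ofReal s ≤ ENNReal.ofReal (f u) := ENNReal.ofReal_le_ofReal h1.le
            _ = F u := ENNReal.ofReal_toReal (hF_ne_top u)
        have hiInter : Set.Ioc (0:ℝ) t₀ = ⋂ n : ℕ, Set.Ioc 0 (t₀ + 1/(n+1)) := by
          ext x
          simp only [Set.mem_Ioc, Set.mem_iInter]
          constructor
          · intro hx n
            exact ⟨hx.1, le_trans hx.2 (le_add_of_nonneg_right (by positivity))⟩
          · intro hx
            refine ⟨(hx 0).1, ?_⟩
            refine le_of_forall_pos_le_add fun ε hε => ?_
            obtain ⟨n, hn⟩ := exists_nat_one_div_lt hε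
            have := (hx n).2
            linarith
        have hanti : Antitone fun n : ℕ => Set.Ioc (0:ℝ) (t₀ + 1/(n+1)) := by
          intro m n hmn
          apply Set.Ioc_subset_Ioc_right
          have h1 : (1:ℝ)/(n+1) ≤ 1/(m+1) := by
            apply one_div_le_one_div_of_le (by positivity)
            have : (m:ℝ) ≤ n := Nat.cast_le.mpr hmn
            linarith
          linarith
        have hmeasure : F t₀ = ⨅ n : ℕ, ν (Set.Ioc 0 (t₀ + 1/(n+1))) := by
          show ν (Set.Ioc 0 t₀) = _
          rw [hiInter]
          exact Antitone.measure_iInter hanti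
            (fun n => measurableSet_Ioc.nullMeasurableSet)
            ⟨0, ne_top_of_le_ne_top hA (measure_mono Set.Ioc_subset_Ioi_self)⟩
        rw [hmeasure]
        exact le_iInf fun n => key _ (lt_add_of_pos_right _ (by positivity))
      refine ENNReal.le_sub_of_add_le_right ENNReal.ofReal_ne_top ?_
      calc ν {x : ℝ | s < f x} + ENNReal.ofReal s ≤ ν (Set.Ioi t₀) + ν (Set.Ioc 0 t₀) :=
          add_le_add hνS hFs
        _ = ν (Set.Ioc 0 t₀ ∪ Set.Ioi t₀) := by
            rw [measure_union Set.Ioc_disjoint_Ioi_same measurableSet_Ioi, add_comm]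
        _ = A := by rw [Set.Ioc_union_Ioi_eq_Ioi ht₀0]
    · have hempty : {x : ℝ | s < f x} = ∅ := Set.not_nonempty_iff_eq_empty.1 hS
      rw [hempty, measure_empty]
      exact zero_le
  -- pointwise bound
  have pointwise : ∀ t ∈ Set.Ioi (0:ℝ),
      ENNReal.ofReal (η t * t ^ (p - 1)) ≤ g t * F t ^ (p - 1) := by
    intro t ht
    have ht0 : (0:ℝ) < t := ht
    have hηt : 0 ≤ η t := hη_nonneg t ht
    have hgt : g t = ENNReal.ofReal (η t ^ (1 / p)) :=
      Set.indicator_of_mem ht (fun t => ENNReal.ofReal (η t ^ (1 / p)))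
    have hstep : ENNReal.ofReal t * g t ≤ F t := by
      have h1 : F t = ∫⁻ s in Set.Ioc 0 t, g s ∂volume := by
        rw [hF_def]; exact withDensity_apply g measurableSet_Ioc
      have h2 : ENNReal.ofReal t * g t = ∫⁻ _ in Set.Ioc (0:ℝ) t, g t ∂volume := by
        rw [setLIntegral_const, Real.volume_Ioc, sub_zero, mul_comm]
      rw [h1, h2]
      exact setLIntegral_mono hg_meas (fun s hs => hg_anti s hs.1 t ht hs.2)
    have key : g t * (ENNReal.ofReal t * g t) ^ (p - 1)
        = ENNReal.ofReal (η t * t ^ (p - 1)) := by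
      rw [hgt, ← ENNReal.ofReal_mul ht0.le,
        ENNReal.ofReal_rpow_of_nonneg (by positivity) hp1.le,
        ← ENNReal.ofReal_mul (by positivity)]
      congr 1
      have e1 : (t * η t ^ (1/p)) ^ (p-1) = t ^ (p-1) * η t ^ (1/p * (p-1)) := by
        rw [Real.mul_rpow ht0.le (Real.rpow_nonneg hηt _), ← Real.rpow_mul hηt]
      have e3 : 1/p + 1/p * (p-1) = 1 := by field_simp; ring
      have e2 : η t ^ (1/p) * (t ^ (p-1) * η t ^ (1/p * (p-1)))
          = (η t ^ (1/p) * η t ^ (1/p * (p-1))) * t ^ (p-1) := by ring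
      rw [e1, e2, ← Real.rpow_add' hηt (by rw [e3]; norm_num), e3, Real.rpow_one]
    calc ENNReal.ofReal (η t * t ^ (p - 1))
        = g t * (ENNReal.ofReal t * g t) ^ (p - 1) := key.symm
      _ ≤ g t * F t ^ (p - 1) :=
          mul_le_mul_right (ENNReal.rpow_le_rpow hstep hp1.le) _
  -- step 1
  have hFp_meas : Measurable fun t => F t ^ (p - 1) :=
    hF_mono.measurable.pow measurable_const
  have step1 : ∫⁻ t in Set.Ioi (0:ℝ), ENNReal.ofReal (η t * t ^ (p - 1)) ≤
      ∫⁻ t, F t ^ (p - 1) ∂ν := by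
    calc ∫⁻ t in Set.Ioi (0:ℝ), ENNReal.ofReal (η t * t ^ (p - 1))
        ≤ ∫⁻ t in Set.Ioi (0:ℝ), g t * F t ^ (p - 1) ∂volume :=
          setLIntegral_mono (hg_meas.mul hFp_meas) pointwise
      _ ≤ ∫⁻ t, g t * F t ^ (p - 1) ∂volume := setLIntegral_le_lintegral _ _
      _ = ∫⁻ t, F t ^ (p - 1) ∂ν := by
          rw [hν_def, lintegral_withDensity_eq_lintegral_mul volume hg_meas hFp_meas]
          rfl
  -- step 2 : layer cake
  have step2 : ∫⁻ t, F t ^ (p - 1) ∂ν =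
      ENNReal.ofReal (p-1) * ∫⁻ s in Set.Ioi (0:ℝ),
        ν {a | s < f a} * ENNReal.ofReal (s ^ (p - 2)) := by
    have hnn : 0 ≤ᵐ[ν] f := ae_of_all _ fun t => ENNReal.toReal_nonneg
    have lc := MeasureTheory.lintegral_rpow_eq_lintegral_meas_lt_mul ν hnn
      hf_meas.aemeasurable hp1
    have e : p - 1 - 1 = p - 2 := by ring
    rw [e] at lc
    rw [← lc]
    refine lintegral_congr fun t => ?_
    simp only [hf_def]
    rw [← ENNReal.ofReal_rpow_of_nonneg ENNReal.toReal_nonneg hp1.le,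
      ENNReal.ofReal_toReal (hF_ne_top t)]
  set a : ℝ := A.toReal with ha_def
  have ha0 : 0 ≤ a := ENNReal.toReal_nonneg
  -- step 3
  have step3 : ∫⁻ s in Set.Ioi (0:ℝ), ν {a | s < f a} * ENNReal.ofReal (s ^ (p - 2)) ≤
      ∫⁻ s in Set.Ioi (0:ℝ), ENNReal.ofReal ((a - s) * s ^ (p - 2)) := by
    have hAa : A = ENNReal.ofReal a := (ENNReal.ofReal_toReal hA).symm
    have hmeas : Measurable fun s : ℝ => ENNReal.ofReal ((a - s) * s ^ (p - 2)) :=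
      ((measurable_const.sub measurable_id).mul
        (measurable_id.pow measurable_const)).ennreal_ofReal
    refine setLIntegral_mono hmeas fun s hs => ?_
    have hs0 : (0:ℝ) < s := hs
    by_cases hsa : s ≤ a
    · calc ν {a | s < f a} * ENNReal.ofReal (s ^ (p - 2))
          ≤ (A - ENNReal.ofReal s) * ENNReal.ofReal (s ^ (p - 2)) :=
            mul_le_mul_left (tail s hs0) _
        _ = ENNReal.ofReal ((a - s) * s ^ (p - 2)) := by
            rw [hAa, ← ENNReal.ofReal_sub a hs0.le,
              ← ENNReal.ofReal_mul (by linarith : (0:ℝ) ≤ a - s)]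
    · have h1 : A - ENNReal.ofReal s = 0 := by
        rw [hAa]
        exact tsub_eq_zero_of_le (ENNReal.ofReal_le_ofReal (by linarith))
      have h2 : ν {a | s < f a} = 0 :=
        le_antisymm (by rw [← h1]; exact tail s hs0) zero_le
      simp [h2]
  -- step 4 : computation
  have step4 : ∫⁻ s in Set.Ioi (0:ℝ), ENNReal.ofReal ((a - s) * s ^ (p - 2)) ≤
      ENNReal.ofReal (a ^ p / ((p-1) * p)) := by
    have hp2 : (-1:ℝ) < p - 2 := by linarith
    have hptw : ∀ s : ℝ, 0 ≤ s → (a - s) * s ^ (p-2) = a * s ^ (p-2) - s ^ (p-1) := by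
      intro s hs
      rcases eq_or_lt_of_le hs with h | h
      · simp [← h, Real.zero_rpow (by linarith : p - 1 ≠ 0)]
      · have : s ^ (p-1) = s * s ^ (p-2) := by
          rw [show p - 1 = 1 + (p-2) by ring,
            Real.rpow_add' hs (by norm_num; linarith), Real.rpow_one]
        rw [this]; ring
    have hsplit : Set.Ioi (0:ℝ) = Set.Ioc 0 a ∪ Set.Ioi a :=
      (Set.Ioc_union_Ioi_eq_Ioi ha0).symm
    rw [hsplit, lintegral_union measurableSet_Ioi Set.Ioc_disjoint_Ioi_same]
    have hIoi : ∫⁻ s in Set.Ioi a, ENNReal.ofReal ((a - s) * s ^ (p - 2)) = 0 := by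
      have hz : ∀ s ∈ Set.Ioi a, ENNReal.ofReal ((a - s) * s ^ (p - 2)) = (0:ℝ≥0∞) := by
        intro s hs
        refine ENNReal.ofReal_eq_zero.mpr ?_
        have has : a < s := hs
        have hs0 : (0:ℝ) < s := lt_of_le_of_lt ha0 has
        nlinarith [Real.rpow_nonneg hs0.le (p-2)]
      rw [setLIntegral_congr_fun measurableSet_Ioi hz, lintegral_zero]
    have hint2 : IntervalIntegrable (fun s => a * s ^ (p-2) - s ^ (p-1)) volume 0 a :=
      ((intervalIntegral.intervalIntegrable_rpow' hp2).const_mul a).sub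
        (intervalIntegral.intervalIntegrable_rpow' (by linarith))
    have hint : IntegrableOn (fun s => (a - s) * s ^ (p-2)) (Set.Ioc 0 a) volume := by
      refine hint2.1.congr ?_
      exact (ae_restrict_iff' measurableSet_Ioc).2
        (ae_of_all _ fun s hs => (hptw s hs.1.le).symm)
    have hnn : 0 ≤ᵐ[volume.restrict (Set.Ioc 0 a)] fun s => (a - s) * s ^ (p-2) :=
      (ae_restrict_iff' measurableSet_Ioc).2 (ae_of_all _ fun s hs =>
        mul_nonneg (by linarith [hs.2]) (Real.rpow_nonneg hs.1.le _))
    have heq : ∫⁻ s in Set.Ioc 0 a, ENNReal.ofReal ((a - s) * s ^ (p - 2))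
        = ENNReal.ofReal (∫ s in Set.Ioc 0 a, (a - s) * s ^ (p - 2)) :=
      (ofReal_integral_eq_lintegral_ofReal hint hnn).symm
    have hapow : a ^ p = a * a ^ (p-1) := by
      have h := Real.rpow_add' ha0 (show 1 + (p-1) ≠ 0 by norm_num; linarith)
      rw [Real.rpow_one, show 1 + (p-1) = p by ring] at h
      exact h
    have hval : ∫ s in Set.Ioc 0 a, (a - s) * s ^ (p - 2) = a ^ p / ((p-1) * p) := by
      rw [← intervalIntegral.integral_of_le ha0]
      rw [intervalIntegral.integral_congr
        (fun s hs => hptw s (by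
          rcases Set.mem_uIcc.1 hs with h | h
          · exact h.1
          · linarith [h.1, h.2]))]
      rw [intervalIntegral.integral_sub
        ((intervalIntegral.intervalIntegrable_rpow' hp2).const_mul a)
        (intervalIntegral.intervalIntegrable_rpow' (by linarith)),
        intervalIntegral.integral_const_mul,
        integral_rpow (Or.inl hp2), integral_rpow (Or.inl (by linarith : (-1:ℝ) < p - 1))]
      rw [show p - 2 + 1 = p - 1 by ring, show p - 1 + 1 = p by ring,
        Real.zero_rpow (by linarith : p - 1 ≠ 0), Real.zero_rpow (by linarith : p ≠ 0)]
      rw [hapow]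
      field_simp
      ring
    rw [hIoi, heq, hval, add_zero]
  calc ENNReal.ofReal p * ∫⁻ t in Set.Ioi (0:ℝ), ENNReal.ofReal (η t * t ^ (p - 1))
      ≤ ENNReal.ofReal p * ∫⁻ t, F t ^ (p - 1) ∂ν := mul_le_mul_right step1 _
    _ = ENNReal.ofReal p * (ENNReal.ofReal (p-1) * ∫⁻ s in Set.Ioi (0:ℝ),
        ν {a | s < f a} * ENNReal.ofReal (s ^ (p - 2))) := by rw [step2]
    _ ≤ ENNReal.ofReal p * (ENNReal.ofReal (p-1) *
        ENNReal.ofReal (a ^ p / ((p-1) * p))) := by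
          exact mul_le_mul_right (mul_le_mul_right (le_trans step3 step4) _) _
    _ = ENNReal.ofReal (p * ((p-1) * (a ^ p / ((p-1) * p)))) := by
          rw [← ENNReal.ofReal_mul (by linarith : (0:ℝ) ≤ p - 1), ← ENNReal.ofReal_mul hp0.le]
    _ = ENNReal.ofReal (a ^ p) := by
          congr 1
          field_simp
    _ = A ^ p := by
          rw [← ENNReal.ofReal_toReal hA, ← ENNReal.ofReal_rpow_of_nonneg ENNReal.toReal_nonneg hp0.le]
end

section
/- Let n ≥ 7 be an integer and set γ_n := −(n−2)/2 + √(((n−2)/2)² − (n−1)). Let U : (0,1] → ℝ be twice differentiable with U(r) > 0 for every r ∈ (0,1], and suppose that for every r ∈ (0,1] the differential inequality U''(r) + ((n−1)/r)·U'(r) + ((n−1)/r²)·U(r) ≤ 0 holds. Then U(r) ≥ U(1) · r^{γ_n} for every r ∈ (0,1]. -/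
open Set Filter

/-- Growth lower bound for positive supersolutions of the Euler differential inequality:
if `n ≥ 7`, `γₙ = -(n-2)/2 + √(((n-2)/2)² - (n-1))`, and `U > 0` is twice differentiable on
`(0,1]` with `U'' + ((n-1)/r) U' + ((n-1)/r²) U ≤ 0` there, then `U(r) ≥ U(1) · r^{γₙ}`
for all `r ∈ (0,1]`. -/
theorem growth_lower_bound_euler_inequality
    (n : ℕ) (hn : 7 ≤ n)
    (γ : ℝ)
    (hγ : γ = -((n : ℝ) - 2) / 2 + Real.sqrt ((((n : ℝ) - 2) / 2) ^ 2 - ((n : ℝ) - 1)))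
    (U U' U'' : ℝ → ℝ)
    (hU' : ∀ r ∈ Set.Ioc (0 : ℝ) 1, HasDerivAt U (U' r) r)
    (hU'' : ∀ r ∈ Set.Ioc (0 : ℝ) 1, HasDerivAt U' (U'' r) r)
    (hUpos : ∀ r ∈ Set.Ioc (0 : ℝ) 1, 0 < U r)
    (hineq : ∀ r ∈ Set.Ioc (0 : ℝ) 1,
      U'' r + (((n : ℝ) - 1) / r) * U' r + (((n : ℝ) - 1) / r ^ 2) * U r ≤ 0) :
    ∀ r ∈ Set.Ioc (0 : ℝ) 1, U 1 * r ^ γ ≤ U r := by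
  have hN7 : (7:ℝ) ≤ (n:ℝ) := by exact_mod_cast hn
  set N : ℝ := (n : ℝ) with hNdef
  have hD : 0 < ((N-2)/2)^2 - (N-1) := by nlinarith
  have hsd : 0 < Real.sqrt (((N-2)/2)^2 - (N-1)) := Real.sqrt_pos.mpr hD
  have hsq : Real.sqrt (((N-2)/2)^2 - (N-1)) ^ 2 = ((N-2)/2)^2 - (N-1) :=
    Real.sq_sqrt hD.le
  have hγ' : γ = -(N-2)/2 + Real.sqrt (((N-2)/2)^2 - (N-1)) := hγ
  have hγneg : γ < 0 := by
    rw [hγ']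
    nlinarith [hsq, hsd.le, hN7]
  have hquad : γ^2 + (N-2)*γ + (N-1) = 0 := by
    rw [hγ']; linear_combination hsq
  set β : ℝ := N - 1 + 2*γ with hβdef
  have hβ1 : 1 < β := by
    rw [hβdef, hγ']; nlinarith [hsd]
  set m : ℝ := N - 2 + γ with hmdef
  -- the weighted Wronskian F and the quotient g = U / r^γ
  set F : ℝ → ℝ := fun r => r ^ m * (r * U' r - γ * U r) with hFdef
  set g : ℝ → ℝ := fun r => U r * r ^ (-γ) with hgdef
  -- derivative of F on (0,1]
  have hFderiv : ∀ r ∈ Set.Ioc (0:ℝ) 1, HasDerivAt F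
      (r ^ (m-1) * (r^2 * U'' r + (N-1) * r * U' r + (N-1) * U r)) r := by
    intro r hr
    have hr0 : 0 < r := hr.1
    have hpow : HasDerivAt (fun x : ℝ => x ^ m) (m * r ^ (m-1)) r :=
      Real.hasDerivAt_rpow_const (Or.inl hr0.ne')
    have hin : HasDerivAt (fun x => x * U' x - γ * U x)
        (1 * U' r + r * U'' r - γ * U' r) r :=
      ((hasDerivAt_id r).mul (hU'' r hr)).sub ((hU' r hr).const_mul γ)
    have := hpow.mul hin
    convert this using 1
    · rfl
    · rfl
    · rfl
    have h1 : r ^ m = r ^ (m-1) * r := by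
      rw [← Real.rpow_add_one hr0.ne' (m-1)]; ring_nf
    have h2 : -m*γ = N - 1 := by rw [hmdef]; linear_combination -hquad
    rw [h1, hmdef]
    linear_combination (r ^ (N - 2 + γ - 1) * U r) * hquad
  -- F' is nonpositive on (0,1]
  have hFnonpos : ∀ r ∈ Set.Ioc (0:ℝ) 1,
      r ^ (m-1) * (r^2 * U'' r + (N-1) * r * U' r + (N-1) * U r) ≤ 0 := by
    intro r hr
    have hr0 : 0 < r := hr.1
    have h := hineq r hr
    have h2 : r^2 * U'' r + (N-1)*r*U' r + (N-1)*U r ≤ 0 := by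
      have heq : r^2 * (U'' r + (N-1)/r * U' r + (N-1)/r^2 * U r)
          = r^2*U'' r + (N-1)*r*U' r + (N-1)*U r := by
        field_simp
      calc r^2*U'' r + (N-1)*r*U' r + (N-1)*U r
          = r^2 * (U'' r + (N-1)/r * U' r + (N-1)/r^2 * U r) := heq.symm
        _ ≤ r^2 * 0 := mul_le_mul_of_nonneg_left h (sq_nonneg r)
        _ = 0 := mul_zero _
    exact mul_nonpos_iff.mpr (Or.inl ⟨Real.rpow_nonneg hr0.le _, h2⟩)
  -- F is antitone
  have hFanti : ∀ s c : ℝ, 0 < s → s ≤ c → c ≤ 1 → F c ≤ F s := by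
    intro s c hs hsc hc1
    have hmem : ∀ x ∈ Set.Icc s c, x ∈ Set.Ioc (0:ℝ) 1 :=
      fun x hx => ⟨hs.trans_le hx.1, hx.2.trans hc1⟩
    have hanti : AntitoneOn F (Set.Icc s c) := by
      apply antitoneOn_of_deriv_nonpos (convex_Icc s c)
      · exact fun x hx => ((hFderiv x (hmem x hx)).continuousAt).continuousWithinAt
      · intro x hx
        rw [interior_Icc] at hx
        exact ((hFderiv x (hmem x ⟨hx.1.le, hx.2.le⟩)).differentiableAt).differentiableWithinAt
      · intro x hx
        rw [interior_Icc] at hx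
        have hx' := hmem x ⟨hx.1.le, hx.2.le⟩
        rw [(hFderiv x hx').deriv]
        exact hFnonpos x hx'
    exact hanti (Set.left_mem_Icc.mpr hsc) (Set.right_mem_Icc.mpr hsc) hsc
  -- derivative of g
  set G' : ℝ → ℝ := fun r => F r * r ^ (-β) with hG'def
  have hgderiv : ∀ r ∈ Set.Ioc (0:ℝ) 1, HasDerivAt g (G' r) r := by
    intro r hr
    have hr0 : 0 < r := hr.1
    have hpow : HasDerivAt (fun x : ℝ => x ^ (-γ)) (-γ * r ^ (-γ-1)) r :=
      Real.hasDerivAt_rpow_const (Or.inl hr0.ne')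
    have hd := (hU' r hr).mul hpow
    convert hd using 1
    · rfl
    · rfl
    · rfl
    have e1 : r ^ m * r ^ (-β) = r ^ (-γ-1) := by
      rw [← Real.rpow_add hr0]; congr 1; rw [hmdef, hβdef]; ring
    have e2 : r ^ (-γ) = r ^ (-γ-1) * r := by
      rw [← Real.rpow_add_one hr0.ne']; congr 1; ring
    show r ^ m * (r * U' r - γ * U r) * r ^ (-β) = _
    rw [e2]
    linear_combination (r * U' r - γ * U r) * e1
  -- main argument
  intro r hr
  by_contra hcon
  push_neg at hcon
  have hr0 : 0 < r := hr.1
  have hr1 : r ≤ 1 := hr.2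
  have hrlt : r < 1 := by
    rcases hr1.lt_or_eq with h | h
    · exact h
    · exfalso; rw [h] at hcon; simp [Real.one_rpow] at hcon
  have hg1 : g 1 = U 1 := by simp [hgdef]
  have hgr : g r < g 1 := by
    have hp : 0 < r ^ (-γ) := Real.rpow_pos_of_pos hr0 _
    have hlt : U r * r^(-γ) < U 1 * r^γ * r^(-γ) := mul_lt_mul_of_pos_right hcon hp
    have hcan : r^γ * r^(-γ) = 1 := by
      rw [← Real.rpow_add hr0]; simp
    rw [mul_assoc, hcan, mul_one] at hlt
    rw [hg1]; exact hlt
  have hgcont : ContinuousOn g (Set.Icc r 1) :=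
    fun x hx => ((hgderiv x ⟨hr0.trans_le hx.1, hx.2⟩).continuousAt).continuousWithinAt
  obtain ⟨c, hc, hceq⟩ := exists_hasDerivAt_eq_slope g G' hrlt hgcont
    (fun x hx => hgderiv x ⟨hr0.trans hx.1, hx.2.le⟩)
  have hc0 : 0 < c := hr0.trans hc.1
  have hc1 : c ≤ 1 := hc.2.le
  have hG'c : 0 < G' c := by
    rw [hceq]; exact div_pos (by linarith) (by linarith)
  have hFc : 0 < F c := by
    have hp : 0 < c ^ (-β) := Real.rpow_pos_of_pos hc0 _
    by_contra hle
    push_neg at hle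
    have : G' c ≤ 0 := mul_nonpos_iff.mpr (Or.inr ⟨hle, hp.le⟩)
    linarith
  set a : ℝ := F c with hadef
  have hβ' : 0 < β - 1 := by linarith
  set hfun : ℝ → ℝ := fun s => g s + (a/(β-1)) * s ^ (1-β) with hhdef
  set H' : ℝ → ℝ := fun s => G' s - a * s ^ (-β) with hH'def
  have hhderiv : ∀ s ∈ Set.Ioc (0:ℝ) c, HasDerivAt hfun (H' s) s := by
    intro s hs
    have hs0 : 0 < s := hs.1
    have hpow : HasDerivAt (fun x : ℝ => x ^ (1-β)) ((1-β) * s ^ (1-β-1)) s :=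
      Real.hasDerivAt_rpow_const (Or.inl hs0.ne')
    have hd := (hgderiv s ⟨hs.1, hs.2.trans hc1⟩).add (hpow.const_mul (a/(β-1)))
    convert hd using 1
    · rfl
    · rfl
    · rfl
    have e : (1:ℝ) - β - 1 = -β := by ring
    show G' s - a * s ^ (-β) = G' s + a/(β-1) * ((1-β) * s ^ (1-β-1))
    rw [e]
    field_simp
    ring
  have hH'nonneg : ∀ x ∈ Set.Ioc (0:ℝ) c, 0 ≤ H' x := by
    intro x hx
    have hx0 : 0 < x := hx.1
    have hxp : 0 < x ^ (-β) := Real.rpow_pos_of_pos hx0 _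
    have hFx : a ≤ F x := hFanti x c hx0 hx.2 hc1
    have : a * x ^ (-β) ≤ F x * x ^ (-β) := mul_le_mul_of_nonneg_right hFx hxp.le
    show (0:ℝ) ≤ F x * x ^ (-β) - a * x ^ (-β)
    linarith
  have hmono : ∀ s : ℝ, 0 < s → s ≤ c → hfun s ≤ hfun c := by
    intro s hs0 hsc
    have hmem : ∀ x ∈ Set.Icc s c, x ∈ Set.Ioc (0:ℝ) c :=
      fun x hx => ⟨hs0.trans_le hx.1, hx.2⟩
    have hmon : MonotoneOn hfun (Set.Icc s c) := by
      apply monotoneOn_of_deriv_nonneg (convex_Icc s c)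
      · exact fun x hx => ((hhderiv x (hmem x hx)).continuousAt).continuousWithinAt
      · intro x hx
        rw [interior_Icc] at hx
        exact ((hhderiv x (hmem x ⟨hx.1.le, hx.2.le⟩)).differentiableAt).differentiableWithinAt
      · intro x hx
        rw [interior_Icc] at hx
        have hx' := hmem x ⟨hx.1.le, hx.2.le⟩
        rw [(hhderiv x hx').deriv]
        exact hH'nonneg x hx'
    exact hmon (Set.left_mem_Icc.mpr hsc) (Set.right_mem_Icc.mpr hsc) hsc
  have hbound : ∀ s : ℝ, 0 < s → s ≤ c → (a/(β-1)) * s ^ (1-β) ≤ hfun c := by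
    intro s hs0 hsc
    have h1 := hmono s hs0 hsc
    have hgpos : 0 < g s :=
      mul_pos (hUpos s ⟨hs0, hsc.trans hc1⟩) (Real.rpow_pos_of_pos hs0 _)
    have : g s + (a/(β-1)) * s ^ (1-β) ≤ hfun c := h1
    linarith
  have htend : Filter.Tendsto (fun s : ℝ => s ^ (1-β)) (nhdsWithin 0 (Set.Ioi 0)) Filter.atTop := by
    have h1 : Filter.Tendsto (fun s : ℝ => s⁻¹) (nhdsWithin 0 (Set.Ioi 0)) Filter.atTop :=
      tendsto_inv_nhdsGT_zero
    have h2 : Filter.Tendsto (fun x : ℝ => x ^ (β-1)) Filter.atTop Filter.atTop :=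
      tendsto_rpow_atTop (by linarith)
    refine (h2.comp h1).congr' ?_
    filter_upwards [self_mem_nhdsWithin] with x hx
    have hx0 : (0:ℝ) < x := hx
    show (x⁻¹) ^ (β-1) = x ^ (1-β)
    rw [Real.inv_rpow hx0.le, ← Real.rpow_neg hx0.le]
    congr 1
    ring
  have hev : ∀ᶠ s in nhdsWithin 0 (Set.Ioi 0), (hfun c)*(β-1)/a + 1 < s ^ (1-β) :=
    htend.eventually_gt_atTop _
  have hIoo : Set.Ioo (0:ℝ) c ∈ nhdsWithin 0 (Set.Ioi 0) :=
    Ioo_mem_nhdsGT_of_mem ⟨le_refl 0, hc0⟩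
  obtain ⟨s, hgt, hsIoo⟩ := (hev.and (Filter.eventually_of_mem hIoo (fun x hx => hx))).exists
  have hb := hbound s hsIoo.1 hsIoo.2.le
  have key := mul_lt_mul_of_pos_left hgt (div_pos hFc hβ')
  have heq : (a/(β-1)) * ((hfun c) * (β-1)/a + 1) = hfun c + a/(β-1) := by
    field_simp
  rw [heq] at key
  have : 0 < a/(β-1) := div_pos hFc hβ'
  linarith
end

section
/- Let n ≥ 7 be an integer, and set γ_n := −(n−2)/2 + √(((n−2)/2)² − (n−1)) and β_n := 2√(((n−2)/2)² − (n−1)) > 0. Let U : (0,1] → ℝ be twice differentiable, and define W : [1,∞) → ℝ by W(s) := U(s^{−1/β_n}) · s^{γ_n/β_n}. Then W is twice differentiable on (1,∞), and W''(s) ≤ 0 holds for every s ∈ (1,∞) if and only if U''(r) + ((n−1)/r)·U'(r) + ((n−1)/r²)·U(r) ≤ 0 holds for every r ∈ (0,1). -/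
private lemma concavity_substitution_euler_aux
    (P Q S u2 u1 u0 a c N : ℝ) (hS : S ≠ 0)
    (I1 : a * (a + 2 * c - 1) = a ^ 2 * N)
    (I2 : c * (c - 1) = a ^ 2 * N) :
    (u2 * (a * (P / S)) * (a * (P / S)) + u1 * (a * ((a - 1) * (P / S / S)))) * Q
      + u1 * (a * (P / S)) * (c * (Q / S))
      + (u1 * (a * (P / S)) * (c * (Q / S)) + u0 * (c * ((c - 1) * (Q / S / S))))
    = a ^ 2 * (Q / S / S) * (P ^ 2 * u2 + N * P * u1 + N * u0) := by
  field_simp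
  linear_combination (u1 * P * Q) * I1 + (u0 * Q) * I2


/-- Change of variables for the Euler differential inequality: with
`γₙ = -(n-2)/2 + √(((n-2)/2)² - (n-1))`, `βₙ = 2√(((n-2)/2)² - (n-1))`, and
`W(s) := U(s^{-1/βₙ}) · s^{γₙ/βₙ}`, the function `W` is twice differentiable on `(1,∞)`,
and `W'' ≤ 0` on `(1,∞)` if and only if
`U'' + ((n-1)/r) U' + ((n-1)/r²) U ≤ 0` on `(0,1)`. -/
theorem concavity_substitution_euler_inequality
    (n : ℕ) (hn : 7 ≤ n)
    (γ β : ℝ)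
    (hγ : γ = -((n : ℝ) - 2) / 2 + Real.sqrt ((((n : ℝ) - 2) / 2) ^ 2 - ((n : ℝ) - 1)))
    (hβ : β = 2 * Real.sqrt ((((n : ℝ) - 2) / 2) ^ 2 - ((n : ℝ) - 1)))
    (U U' U'' : ℝ → ℝ)
    (hU' : ∀ r ∈ Set.Ioc (0 : ℝ) 1, HasDerivAt U (U' r) r)
    (hU'' : ∀ r ∈ Set.Ioc (0 : ℝ) 1, HasDerivAt U' (U'' r) r)
    (W : ℝ → ℝ)
    (hW : ∀ s ∈ Set.Ici (1 : ℝ), W s = U (s ^ (-1 / β)) * s ^ (γ / β)) :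
    (∀ s ∈ Set.Ioi (1 : ℝ), DifferentiableAt ℝ W s ∧ DifferentiableAt ℝ (deriv W) s) ∧
    ((∀ s ∈ Set.Ioi (1 : ℝ), deriv (deriv W) s ≤ 0) ↔
      (∀ r ∈ Set.Ioo (0 : ℝ) 1,
        U'' r + (((n : ℝ) - 1) / r) * U' r + (((n : ℝ) - 1) / r ^ 2) * U r ≤ 0)) := by
  have hn7 : (7:ℝ) ≤ (n:ℝ) := by exact_mod_cast hn
  have hDpos : 0 < (((n : ℝ) - 2) / 2) ^ 2 - ((n : ℝ) - 1) := by nlinarith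
  have he2 : Real.sqrt ((((n : ℝ) - 2) / 2) ^ 2 - ((n : ℝ) - 1)) ^ 2
      = (((n : ℝ) - 2) / 2) ^ 2 - ((n : ℝ) - 1) := Real.sq_sqrt hDpos.le
  have hβpos : 0 < β := by
    rw [hβ]; positivity
  have hβne : β ≠ 0 := ne_of_gt hβpos
  set a : ℝ := -1 / β with ha
  set c : ℝ := γ / β with hc
  have haneg : a < 0 := div_neg_of_neg_of_pos (by norm_num) hβpos
  have hane : a ≠ 0 := ne_of_lt haneg
  -- key scalar identities
  have hsum : β - 2 * γ = (n : ℝ) - 2 := by rw [hγ, hβ]; ring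
  have hprod : γ * (γ - β) = (n : ℝ) - 1 := by
    rw [hγ, hβ]; nlinarith [he2]
  have I1 : a * (a + 2 * c - 1) = a ^ 2 * ((n : ℝ) - 1) := by
    have : a + 2 * c - 1 = a * ((n:ℝ) - 1) := by
      rw [ha, hc]; field_simp; linarith
    rw [this]; ring
  have I2 : c * (c - 1) = a ^ 2 * ((n : ℝ) - 1) := by
    rw [ha, hc]; field_simp; nlinarith [hprod]
  -- first derivative formula
  set g : ℝ → ℝ := fun t => U' (t ^ a) * (a * t ^ (a - 1)) * t ^ c
      + U (t ^ a) * (c * t ^ (c - 1)) with hg_def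
  have hr_mem : ∀ s : ℝ, 1 < s → s ^ a ∈ Set.Ioo (0:ℝ) 1 := fun s hs =>
    ⟨Real.rpow_pos_of_pos (lt_trans one_pos hs) a,
     Real.rpow_lt_one_of_one_lt_of_neg hs haneg⟩
  have hWd : ∀ s : ℝ, 1 < s → HasDerivAt W (g s) s := by
    intro s hs
    have hs0 : (0:ℝ) < s := lt_trans one_pos hs
    have hr := hr_mem s hs
    have hrpow : HasDerivAt (fun t : ℝ => t ^ a) (a * s ^ (a - 1)) s :=
      Real.hasDerivAt_rpow_const (Or.inl hs0.ne')
    have hcomp : HasDerivAt (fun t : ℝ => U (t ^ a)) (U' (s ^ a) * (a * s ^ (a - 1))) s :=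
      (hU' _ ⟨hr.1, hr.2.le⟩).comp s hrpow
    have hsc : HasDerivAt (fun t : ℝ => t ^ c) (c * s ^ (c - 1)) s :=
      Real.hasDerivAt_rpow_const (Or.inl hs0.ne')
    refine (hcomp.mul hsc).congr_of_eventuallyEq ?_
    exact Filter.eventuallyEq_of_mem (Ioi_mem_nhds hs)
      (fun t ht => hW t (Set.mem_Ici.mpr (le_of_lt (Set.mem_Ioi.mp ht))))
  -- second derivative formula
  set G : ℝ → ℝ := fun s =>
      (U'' (s ^ a) * (a * s ^ (a - 1)) * (a * s ^ (a - 1))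
        + U' (s ^ a) * (a * ((a - 1) * s ^ (a - 1 - 1)))) * s ^ c
      + U' (s ^ a) * (a * s ^ (a - 1)) * (c * s ^ (c - 1))
      + (U' (s ^ a) * (a * s ^ (a - 1)) * (c * s ^ (c - 1))
        + U (s ^ a) * (c * ((c - 1) * s ^ (c - 1 - 1)))) with hG_def
  have hgd : ∀ s : ℝ, 1 < s → HasDerivAt g (G s) s := by
    intro s hs
    have hs0 : (0:ℝ) < s := lt_trans one_pos hs
    have hr := hr_mem s hs
    have hrpow : HasDerivAt (fun t : ℝ => t ^ a) (a * s ^ (a - 1)) s :=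
      Real.hasDerivAt_rpow_const (Or.inl hs0.ne')
    have hU'comp : HasDerivAt (fun t : ℝ => U' (t ^ a)) (U'' (s ^ a) * (a * s ^ (a - 1))) s :=
      (hU'' _ ⟨hr.1, hr.2.le⟩).comp s hrpow
    have hUcomp : HasDerivAt (fun t : ℝ => U (t ^ a)) (U' (s ^ a) * (a * s ^ (a - 1))) s :=
      (hU' _ ⟨hr.1, hr.2.le⟩).comp s hrpow
    have hlin : HasDerivAt (fun t : ℝ => a * t ^ (a - 1)) (a * ((a - 1) * s ^ (a - 1 - 1))) s :=
      (Real.hasDerivAt_rpow_const (Or.inl hs0.ne')).const_mul a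
    have hlin2 : HasDerivAt (fun t : ℝ => c * t ^ (c - 1)) (c * ((c - 1) * s ^ (c - 1 - 1))) s :=
      (Real.hasDerivAt_rpow_const (Or.inl hs0.ne')).const_mul c
    have hsc : HasDerivAt (fun t : ℝ => t ^ c) (c * s ^ (c - 1)) s :=
      Real.hasDerivAt_rpow_const (Or.inl hs0.ne')
    exact (((hU'comp.mul hlin).mul hsc).add (hUcomp.mul hlin2))
  have hderivWg : ∀ s : ℝ, 1 < s → deriv W s = g s := fun s hs => (hWd s hs).deriv
  have hW2 : ∀ s : ℝ, 1 < s → HasDerivAt (deriv W) (G s) s := by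
    intro s hs
    refine (hgd s hs).congr_of_eventuallyEq ?_
    exact Filter.eventuallyEq_of_mem (Ioi_mem_nhds hs) (fun t ht => hderivWg t ht)
  -- algebraic identity for G
  have hkey : ∀ s : ℝ, 1 < s → G s = a ^ 2 * s ^ (c - 2) *
      ((s ^ a) ^ 2 * U'' (s ^ a) + ((n:ℝ) - 1) * (s ^ a) * U' (s ^ a)
        + ((n:ℝ) - 1) * U (s ^ a)) := by
    intro s hs
    have hs0 : (0:ℝ) < s := lt_trans one_pos hs
    have e1 : s ^ (a - 1) = s ^ a / s := by
      rw [Real.rpow_sub hs0, Real.rpow_one]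
    have e2 : s ^ (a - 1 - 1) = s ^ a / s / s := by
      rw [Real.rpow_sub hs0, Real.rpow_sub hs0, Real.rpow_one]
    have e3 : s ^ (c - 1) = s ^ c / s := by
      rw [Real.rpow_sub hs0, Real.rpow_one]
    have e4 : s ^ (c - 1 - 1) = s ^ c / s / s := by
      rw [Real.rpow_sub hs0, Real.rpow_sub hs0, Real.rpow_one]
    have e5 : s ^ (c - 2) = s ^ c / s / s := by
      rw [show c - 2 = c - 1 - 1 by ring, e4]
    simp only [hG_def]
    simp only [e1, e2, e3, e4, e5]
    exact concavity_substitution_euler_aux (s ^ a) (s ^ c) s (U'' (s ^ a)) (U' (s ^ a))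
      (U (s ^ a)) a c ((n:ℝ) - 1) hs0.ne' I1 I2
  -- positivity of the prefactor
  have hpre : ∀ s : ℝ, 1 < s → 0 < a ^ 2 * s ^ (c - 2) := by
    intro s hs
    have hs0 : (0:ℝ) < s := lt_trans one_pos hs
    have := Real.rpow_pos_of_pos hs0 (c - 2)
    positivity
  constructor
  · intro s hs
    exact ⟨(hWd s hs).differentiableAt, (hW2 s hs).differentiableAt⟩
  · constructor
    · intro h r hr
      have hr0 : (0:ℝ) < r := hr.1
      have hr1 : r < 1 := hr.2
      set s : ℝ := r ^ (-β) with hs_def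
      have hs : 1 < s := by
        rw [hs_def]
        exact (Real.one_lt_rpow_iff_of_pos hr0).mpr (Or.inr ⟨hr1, by linarith⟩)
      have hsa : s ^ a = r := by
        have hba : -β * a = 1 := by rw [ha]; field_simp
        rw [hs_def, ← Real.rpow_mul hr0.le, hba, Real.rpow_one]
      have hW'' := h s (Set.mem_Ioi.mpr hs)
      rw [(hW2 s hs).deriv, hkey s hs, hsa] at hW''
      have hp := hpre s hs
      have hF : r ^ 2 * U'' r + ((n:ℝ) - 1) * r * U' r + ((n:ℝ) - 1) * U r ≤ 0 := by
        have h0 : a ^ 2 * s ^ (c - 2) *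
            (r ^ 2 * U'' r + ((n:ℝ) - 1) * r * U' r + ((n:ℝ) - 1) * U r)
            ≤ a ^ 2 * s ^ (c - 2) * 0 := by rw [mul_zero]; exact hW''
        exact le_of_mul_le_mul_left h0 hp
      have hEF : U'' r + (((n:ℝ) - 1) / r) * U' r + (((n:ℝ) - 1) / r ^ 2) * U r
          = (r ^ 2 * U'' r + ((n:ℝ) - 1) * r * U' r + ((n:ℝ) - 1) * U r) / r ^ 2 := by
        field_simp
      rw [hEF]
      exact div_nonpos_of_nonpos_of_nonneg hF (sq_nonneg r)
    · intro h s hs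
      have hs1 : 1 < s := hs
      have hr := hr_mem s hs1
      have hE := h (s ^ a) hr
      rw [(hW2 s hs1).deriv, hkey s hs1]
      have hr0 : (0:ℝ) < s ^ a := hr.1
      have hF : (s ^ a) ^ 2 * U'' (s ^ a) + ((n:ℝ) - 1) * (s ^ a) * U' (s ^ a)
          + ((n:ℝ) - 1) * U (s ^ a)
          = (s ^ a) ^ 2 * (U'' (s ^ a) + (((n:ℝ) - 1) / (s ^ a)) * U' (s ^ a)
            + (((n:ℝ) - 1) / (s ^ a) ^ 2) * U (s ^ a)) := by
        field_simp
      rw [hF]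
      have h1 : (s ^ a) ^ 2 * (U'' (s ^ a) + (((n:ℝ) - 1) / (s ^ a)) * U' (s ^ a)
            + (((n:ℝ) - 1) / (s ^ a) ^ 2) * U (s ^ a)) ≤ 0 :=
        mul_nonpos_of_nonneg_of_nonpos (sq_nonneg _) hE
      exact mul_nonpos_of_nonneg_of_nonpos (hpre s hs1).le h1
end

section
/- Let n ≥ 1 be an integer, let 0 ≤ a < b be real numbers, let ε ∈ [0,1), and let M : [a,b] → ℝ be a nondecreasing function with M(s) > 0 for every s ∈ (a,b]. Suppose that for Lebesgue-almost every s ∈ (a,b), M is differentiable at s and satisfies M(s)^{(n−1)/n} ≤ ε · M(s)^{(n−1)/n} + M'(s). Then for every t ∈ (a,b], one has M(t) ≥ ((1−ε)·(t−a)/n)^n. -/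
open MeasureTheory

/-- If `g` is globally monotone and a.e. on `(c,d)` its derivative is at least `k ≥ 0`,
then `g d - g c ≥ k (d - c)`. -/
lemma monotone_growth_of_ae_deriv_ge {g : ℝ → ℝ} (hg : Monotone g) {c d k : ℝ}
    (hcd : c ≤ d) (hk : 0 ≤ k)
    (h : ∀ᵐ x ∂(volume.restrict (Set.Ioo c d)), k ≤ deriv g x) :
    k * (d - c) ≤ g d - g c := by
  set μ := hg.stieltjesFunction.measure with hμ
  have h1 : ∀ᵐ x ∂(volume.restrict (Set.Ioo c d)),
      ENNReal.ofReal k ≤ μ.rnDeriv volume x := by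
    filter_upwards [h, ae_restrict_of_ae hg.ae_hasDerivAt] with x hx hx'
    have hd : deriv g x = (μ.rnDeriv volume x).toReal := hx'.deriv
    calc ENNReal.ofReal k ≤ ENNReal.ofReal ((μ.rnDeriv volume x).toReal) :=
          ENNReal.ofReal_le_ofReal (hd ▸ hx)
      _ ≤ μ.rnDeriv volume x := ENNReal.ofReal_toReal_le
  have key : ENNReal.ofReal (k * (d - c)) ≤ ENNReal.ofReal (g d - g c) := by
    calc ENNReal.ofReal (k * (d - c))
        = ENNReal.ofReal k * volume (Set.Ioo c d) := by
          rw [Real.volume_Ioo, ENNReal.ofReal_mul hk]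
      _ = ∫⁻ _ in Set.Ioo c d, ENNReal.ofReal k := (setLIntegral_const _ _).symm
      _ ≤ ∫⁻ x in Set.Ioo c d, μ.rnDeriv volume x := lintegral_mono_ae h1
      _ ≤ μ (Set.Ioo c d) := Measure.setLIntegral_rnDeriv_le _
      _ = ENNReal.ofReal (Function.leftLim hg.stieltjesFunction d
            - hg.stieltjesFunction c) := hg.stieltjesFunction.measure_Ioo
      _ ≤ ENNReal.ofReal (g d - g c) := by
          apply ENNReal.ofReal_le_ofReal
          have h2 : g c ≤ hg.stieltjesFunction c := by
            simpa [Monotone.stieltjesFunction] using hg.le_rightLim (le_refl c)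
          have h3 : Function.leftLim hg.stieltjesFunction d ≤ g d := by
            apply le_of_tendsto (hg.stieltjesFunction.mono.tendsto_leftLim d)
            filter_upwards [self_mem_nhdsWithin] with y hy
            exact hg.rightLim_le hy
          linarith
  have hge : (0:ℝ) ≤ g d - g c := sub_nonneg.mpr (hg hcd)
  exact (ENNReal.ofReal_le_ofReal_iff hge).mp key

/-- Integration of the Michael–Simon type isoperimetric differential inequality:
if `M : [a,b] → ℝ` is nondecreasing, positive on `(a,b]`, and for a.e. `s ∈ (a,b)` it is
differentiable with `M(s)^{(n-1)/n} ≤ ε·M(s)^{(n-1)/n} + M'(s)`, then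
`M(t) ≥ ((1-ε)(t-a)/n)^n` for every `t ∈ (a,b]`. -/
theorem mass_lower_bound_of_isoperimetric_diff_ineq
    (n : ℕ) (hn : 1 ≤ n)
    (a b : ℝ) (ha : 0 ≤ a) (hab : a < b)
    (ε : ℝ) (hε : ε ∈ Set.Ico (0 : ℝ) 1)
    (M : ℝ → ℝ)
    (hmono : MonotoneOn M (Set.Icc a b))
    (hpos : ∀ s ∈ Set.Ioc a b, 0 < M s)
    (hae : ∀ᵐ s ∂(volume.restrict (Set.Ioo a b)),
      DifferentiableAt ℝ M s ∧
        M s ^ (((n : ℝ) - 1) / n) ≤ ε * M s ^ (((n : ℝ) - 1) / n) + deriv M s) :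
    ∀ t ∈ Set.Ioc a b, ((1 - ε) * (t - a) / n) ^ n ≤ M t := by
  intro t ht
  have hn0 : (n : ℝ) ≠ 0 := Nat.cast_ne_zero.mpr (by omega)
  have hnpos : (0:ℝ) < n := by positivity
  have hε1 : 0 ≤ 1 - ε := by linarith [hε.2]
  set G : ℝ → ℝ := fun s => M s ^ ((n : ℝ)⁻¹) with hG
  set k : ℝ := (1 - ε) / n with hk
  have hkpos : 0 ≤ k := by positivity
  -- main estimate for each a' ∈ (a, t)
  have main : ∀ a' ∈ Set.Ioo a t, k * (t - a') ≤ G t := by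
    intro a' ha'
    have ha't : Set.Icc a' t ⊆ Set.Ioc a b :=
      fun x hx => ⟨lt_of_lt_of_le ha'.1 hx.1, le_trans hx.2 ht.2⟩
    have hIcc : Set.Icc a' t ⊆ Set.Icc a b :=
      fun x hx => ⟨le_of_lt (ha't hx).1, (ha't hx).2⟩
    -- G is monotone on Icc a' t
    have hGmono : MonotoneOn G (Set.Icc a' t) := by
      intro x hx y hy hxy
      exact Real.rpow_le_rpow (le_of_lt (hpos x (ha't hx)))
        (hmono (hIcc hx) (hIcc hy) hxy) (by positivity)
    -- extend G to a globally monotone function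
    have hbb : BddBelow (G '' Set.Icc a' t) := by
      refine ⟨G a', ?_⟩
      rintro _ ⟨x, hx, rfl⟩
      exact hGmono (Set.left_mem_Icc.mpr (le_of_lt ha'.2)) hx hx.1
    have hba : BddAbove (G '' Set.Icc a' t) := by
      refine ⟨G t, ?_⟩
      rintro _ ⟨x, hx, rfl⟩
      exact hGmono hx (Set.right_mem_Icc.mpr (le_of_lt ha'.2)) hx.2
    obtain ⟨g, hg, hgf⟩ : ∃ g : ℝ → ℝ, Monotone g ∧ Set.EqOn G g (Set.Icc a' t) :=
      hGmono.exists_monotone_extension hbb hba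
    -- a.e. derivative bound for g on Ioo a' t
    have hsub : Set.Ioo a' t ⊆ Set.Ioo a b :=
      fun x hx => ⟨lt_trans ha'.1 hx.1, lt_of_lt_of_le hx.2 ht.2⟩
    have hae' : ∀ᵐ s ∂(volume.restrict (Set.Ioo a' t)),
        DifferentiableAt ℝ M s ∧
          M s ^ (((n : ℝ) - 1) / n) ≤ ε * M s ^ (((n : ℝ) - 1) / n) + deriv M s := by
      apply ae_restrict_of_ae_restrict_of_subset hsub hae
    have hmem : ∀ᵐ s ∂(volume.restrict (Set.Ioo a' t)), s ∈ Set.Ioo a' t :=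
      (ae_restrict_iff' measurableSet_Ioo).mpr (Filter.Eventually.of_forall fun x hx => hx)
    have hderiv : ∀ᵐ s ∂(volume.restrict (Set.Ioo a' t)), k ≤ deriv g s := by
      filter_upwards [hae', hmem] with s hs hsmem
      have hMs : 0 < M s := hpos s (ha't ⟨le_of_lt hsmem.1, le_of_lt hsmem.2⟩)
      -- derivative of G at s
      have hMd : HasDerivAt M (deriv M s) s := hs.1.hasDerivAt
      have hGd : HasDerivAt G (deriv M s * (n : ℝ)⁻¹ * M s ^ ((n : ℝ)⁻¹ - 1)) s :=
        hMd.rpow_const (Or.inl (ne_of_gt hMs))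
      -- g agrees with G near s
      have hnhds : Set.Icc a' t ∈ nhds s := Icc_mem_nhds hsmem.1 hsmem.2
      have heq : g =ᶠ[nhds s] G := by
        filter_upwards [hnhds] with y hy; exact (hgf hy).symm
      have hgd : HasDerivAt g (deriv M s * (n : ℝ)⁻¹ * M s ^ ((n : ℝ)⁻¹ - 1)) s :=
        hGd.congr_of_eventuallyEq heq
      rw [hgd.deriv]
      -- the bound
      have hMder : (1 - ε) * M s ^ (((n : ℝ) - 1) / n) ≤ deriv M s := by nlinarith [hs.2]
      have hfac : (0:ℝ) < (n : ℝ)⁻¹ * M s ^ ((n : ℝ)⁻¹ - 1) := by positivity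
      have h1 : (1 - ε) * M s ^ (((n : ℝ) - 1) / n) * ((n : ℝ)⁻¹ * M s ^ ((n : ℝ)⁻¹ - 1))
          ≤ deriv M s * ((n : ℝ)⁻¹ * M s ^ ((n : ℝ)⁻¹ - 1)) :=
        mul_le_mul_of_nonneg_right hMder (le_of_lt hfac)
      have h2 : M s ^ (((n : ℝ) - 1) / n) * M s ^ ((n : ℝ)⁻¹ - 1) = 1 := by
        rw [← Real.rpow_add hMs]
        have : ((n : ℝ) - 1) / n + ((n : ℝ)⁻¹ - 1) = 0 := by field_simp; ring
        rw [this, Real.rpow_zero]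
      calc k = (1 - ε) * M s ^ (((n : ℝ) - 1) / n) * ((n : ℝ)⁻¹ * M s ^ ((n : ℝ)⁻¹ - 1)) := by
              have hr : (1 - ε) * M s ^ (((n : ℝ) - 1) / n) * ((n : ℝ)⁻¹ * M s ^ ((n : ℝ)⁻¹ - 1))
                  = (1 - ε) / n * (M s ^ (((n : ℝ) - 1) / n) * M s ^ ((n : ℝ)⁻¹ - 1)) := by ring
              rw [hk, hr, h2, mul_one]
        _ ≤ deriv M s * ((n : ℝ)⁻¹ * M s ^ ((n : ℝ)⁻¹ - 1)) := h1
        _ = deriv M s * (n : ℝ)⁻¹ * M s ^ ((n : ℝ)⁻¹ - 1) := by ring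
    have hkey := monotone_growth_of_ae_deriv_ge hg (le_of_lt ha'.2) hkpos hderiv
    have hga' : 0 ≤ g a' := by
      rw [← hgf (Set.left_mem_Icc.mpr (le_of_lt ha'.2))]
      exact Real.rpow_nonneg (le_of_lt (hpos a' (ha't (Set.left_mem_Icc.mpr
        (le_of_lt ha'.2))))) _
    have hgt : g t = G t := (hgf (Set.right_mem_Icc.mpr (le_of_lt ha'.2))).symm
    linarith
  -- pass to the limit a' → a⁺
  have hlim : k * (t - a) ≤ G t := by
    have htend : Filter.Tendsto (fun a' => k * (t - a')) (nhdsWithin a (Set.Ioi a))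
        (nhds (k * (t - a))) := by
      apply Filter.Tendsto.mono_left _ nhdsWithin_le_nhds
      exact (tendsto_const_nhds.sub Filter.tendsto_id).const_mul k
    apply le_of_tendsto htend
    filter_upwards [Ioo_mem_nhdsGT_of_mem (Set.mem_Ico.mpr ⟨le_refl a, ht.1⟩)] with a' ha'
    exact main a' ha'
  -- conclude
  have hMt : 0 < M t := hpos t ht
  have hGt : G t ^ n = M t := Real.rpow_inv_natCast_pow (le_of_lt hMt) (by omega)
  calc ((1 - ε) * (t - a) / n) ^ n = (k * (t - a)) ^ n := by rw [hk]; ring_nf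
    _ ≤ G t ^ n := by
        apply pow_le_pow_left₀ _ hlim
        have : 0 ≤ t - a := by linarith [ht.1]
        positivity
    _ = M t := hGt
end

section
/- Let d ≥ 1 be an integer, let Ω ⊆ ℝ^d be an open set, let V : Ω → ℝ be continuous, and let u : Ω → ℝ be a twice continuously differentiable function with u(x) > 0 for all x ∈ Ω and Δu(x) + V(x)·u(x) ≤ 0 for all x ∈ Ω. Then for every continuously differentiable function φ : ℝ^d → ℝ with compact support contained in Ω, one has ∫_Ω (‖∇φ(x)‖² − V(x)·φ(x)²) dx ≥ 0, and equality holds if and only if φ is identically zero. -/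
open MeasureTheory

open Set Filter Topology Manifold Function

section Aux

lemma my_cutoff {E : Type*} [NormedAddCommGroup E] [InnerProductSpace ℝ E]
    [FiniteDimensional ℝ E] {K Ω : Set E} (hK : IsCompact K) (hΩ : IsOpen Ω) (hKΩ : K ⊆ Ω) :
    ∃ χ : E → ℝ, ContDiff ℝ 2 χ ∧ HasCompactSupport χ ∧ tsupport χ ⊆ Ω ∧
      (∃ N : Set E, IsOpen N ∧ K ⊆ N ∧ EqOn χ 1 N) ∧ ∀ x, χ x ∈ Icc (0:ℝ) 1 := by
  obtain ⟨K', hK'c, hKK', hK'Ω⟩ := exists_compact_between hK hΩ hKΩ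
  obtain ⟨f, hf1, hf0, hf01⟩ := exists_contMDiffMap_one_nhds_of_subset_interior (𝓘(ℝ, E))
    (M := E) (n := 2) hK.isClosed hKK'
  refine ⟨f, ?_, ?_, ?_, ?_, hf01⟩
  · exact f.contMDiff.contDiff.of_le (by norm_cast)
  · exact HasCompactSupport.of_support_subset_isCompact hK'c (fun x hx => by
      by_contra h; exact hx (hf0 x h))
  · refine (closure_minimal ?_ hK'c.isClosed).trans hK'Ω
    intro x hx; by_contra h; exact hx (hf0 x h)
  · obtain ⟨N, hNo, hKN, hN⟩ := eventually_nhdsSet_iff_exists.mp hf1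
    exact ⟨N, hNo, hKN, hN⟩

lemma contDiff_of_open_cover {E : Type*} [NormedAddCommGroup E] [NormedSpace ℝ E]
    {f : E → ℝ} {n : ℕ} {s s' : Set E} (hs : IsOpen s) (hs' : IsOpen s')
    (hcov : s ∪ s' = univ) (h1 : ContDiffOn ℝ n f s) (h2 : ContDiffOn ℝ n f s') :
    ContDiff ℝ n f := by
  rw [← contDiffOn_univ]
  apply contDiffOn_of_locally_contDiffOn
  intro x _
  rcases (by rw [hcov]; trivial : x ∈ s ∪ s') with hx | hx
  · exact ⟨s, hs, hx, h1.mono inter_subset_right⟩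
  · exact ⟨s', hs', hx, h2.mono inter_subset_right⟩

lemma continuous_of_open_cover {E : Type*} [TopologicalSpace E]
    {f : E → ℝ} {s s' : Set E} (hs : IsOpen s) (hs' : IsOpen s')
    (hcov : s ∪ s' = univ) (h1 : ContinuousOn f s) (h2 : ContinuousOn f s') :
    Continuous f := by
  rw [continuous_iff_continuousAt]
  intro x
  rcases (by rw [hcov]; trivial : x ∈ s ∪ s') with hx | hx
  · exact h1.continuousAt (hs.mem_nhds hx)
  · exact h2.continuousAt (hs'.mem_nhds hx)

lemma gradient_apply_single {d : ℕ} (f : EuclideanSpace ℝ (Fin d) → ℝ)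
    (x : EuclideanSpace ℝ (Fin d)) (i : Fin d) :
    gradient f x i = fderiv ℝ f x (EuclideanSpace.single i 1) := by
  have h : inner ℝ (gradient f x) (EuclideanSpace.single i (1:ℝ))
      = fderiv ℝ f x (EuclideanSpace.single i 1) := by
    rw [gradient]
    exact InnerProductSpace.toDual_symm_apply
  rw [← h, EuclideanSpace.inner_single_right]
  simp

lemma norm_gradient_sq {d : ℕ} (f : EuclideanSpace ℝ (Fin d) → ℝ)
    (x : EuclideanSpace ℝ (Fin d)) :
    ‖gradient f x‖ ^ 2 = ∑ i, (fderiv ℝ f x (EuclideanSpace.single i 1)) ^ 2 := by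
  rw [← real_inner_self_eq_norm_sq]
  rw [PiLp.inner_apply]
  refine Finset.sum_congr rfl fun i _ => ?_
  rw [← gradient_apply_single]
  simp [RCLike.inner_apply, sq]

lemma clm_eq_zero_of_single {d : ℕ} (L : EuclideanSpace ℝ (Fin d) →L[ℝ] ℝ)
    (h : ∀ i, L (EuclideanSpace.single i 1) = 0) : L = 0 := by
  apply ContinuousLinearMap.coe_injective
  apply Module.Basis.ext (EuclideanSpace.basisFun (Fin d) ℝ).toBasis
  intro i
  simpa [EuclideanSpace.basisFun_apply] using h i

end Aux


/-- A positive supersolution of `Δu + V·u = 0` on an open set `Ω ⊆ ℝ^d` forces the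
Schrödinger quadratic form `φ ↦ ∫_Ω (‖∇φ‖² − V·φ²)` to be nonnegative on compactly
supported `C¹` functions `φ` with support in `Ω`, with equality iff `φ ≡ 0`.
Here the Laplacian is the trace of the Hessian, written as the sum of the pure second
partial derivatives. -/
theorem schrodinger_form_nonneg_of_positive_supersolution
    (d : ℕ) (hd : 1 ≤ d)
    (Ω : Set (EuclideanSpace ℝ (Fin d))) (hΩ : IsOpen Ω)
    (V : EuclideanSpace ℝ (Fin d) → ℝ) (hV : ContinuousOn V Ω)
    (u : EuclideanSpace ℝ (Fin d) → ℝ) (hu : ContDiffOn ℝ 2 u Ω)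
    (hupos : ∀ x ∈ Ω, 0 < u x)
    (hsuper : ∀ x ∈ Ω,
      (∑ i : Fin d,
          fderiv ℝ (fun y => fderiv ℝ u y (EuclideanSpace.single i 1)) x
            (EuclideanSpace.single i 1)) + V x * u x ≤ 0) :
    ∀ φ : EuclideanSpace ℝ (Fin d) → ℝ,
      ContDiff ℝ 1 φ → HasCompactSupport φ → tsupport φ ⊆ Ω →
      (0 ≤ ∫ x in Ω, (‖gradient φ x‖ ^ 2 - V x * (φ x) ^ 2)) ∧
      ((∫ x in Ω, (‖gradient φ x‖ ^ 2 - V x * (φ x) ^ 2)) = 0 ↔ ∀ x, φ x = 0) := by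
  intro φ hφ hφc hφΩ
  classical
  set e : Fin d → EuclideanSpace ℝ (Fin d) := fun i => EuclideanSpace.single i 1 with he
  set K := tsupport φ with hK
  have hKc : IsCompact K := hφc
  -- cutoff function
  obtain ⟨χ, hχ2, hχcs, hχΩ, ⟨N₀, hN₀o, hKN₀, hχ1⟩, hχ01⟩ := my_cutoff hKc hΩ hφΩ
  set N : Set (EuclideanSpace ℝ (Fin d)) := N₀ ∩ Ω with hN
  have hNo : IsOpen N := hN₀o.inter hΩ
  have hKN : K ⊆ N := fun x hx => ⟨hKN₀ hx, hφΩ hx⟩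
  have hNΩ : N ⊆ Ω := inter_subset_right
  have hχN : ∀ x ∈ N, χ x = 1 := fun x hx => hχ1 hx.1
  -- globalized supersolution t and potential W
  set t : EuclideanSpace ℝ (Fin d) → ℝ := fun x => if x ∈ Ω then χ x * u x else 0 with ht
  set W : EuclideanSpace ℝ (Fin d) → ℝ := fun x => if x ∈ Ω then χ x * V x else 0 with hW
  have hcov : Ω ∪ (tsupport χ)ᶜ = univ := by
    apply eq_univ_of_forall; intro x
    by_cases hx : x ∈ tsupport χ
    · exact Or.inl (hχΩ hx)
    · exact Or.inr hx
  have htΩ : EqOn t (fun x => χ x * u x) Ω := fun x hx => if_pos hx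
  have ht0 : ∀ x ∉ tsupport χ, t x = 0 := by
    intro x hx
    have : χ x = 0 := image_eq_zero_of_notMem_tsupport hx
    simp only [ht, this, zero_mul, ite_self]
  have hW0 : ∀ x ∉ tsupport χ, W x = 0 := by
    intro x hx
    have : χ x = 0 := image_eq_zero_of_notMem_tsupport hx
    simp only [hW, this, zero_mul, ite_self]
  have ht2 : ContDiff ℝ 2 t := by
    apply contDiff_of_open_cover hΩ (isClosed_tsupport χ).isOpen_compl hcov
    · exact ((hχ2.contDiffOn).mul hu).congr fun x hx => htΩ hx
    · exact contDiffOn_const.congr fun x hx => ht0 x hx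
  have hWc : Continuous W := by
    apply continuous_of_open_cover hΩ (isClosed_tsupport χ).isOpen_compl hcov
    · exact ((hχ2.continuous.continuousOn).mul hV).congr fun x hx => if_pos hx
    · exact continuousOn_const.congr fun x hx => hW0 x hx
  have htu : ∀ x ∈ N, t x = u x := by
    intro x hx
    simp only [ht, if_pos (hNΩ hx), hχN x hx, one_mul]
  have htpos : ∀ x ∈ N, 0 < t x := fun x hx => (htu x hx).symm ▸ hupos x (hNΩ hx)
  have hWV : ∀ x ∈ N, W x = V x := by
    intro x hx
    simp only [hW, if_pos (hNΩ hx), hχN x hx, one_mul]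
  have htsupp : support t ⊆ tsupport χ := by
    intro x hx; by_contra h; exact hx (ht0 x h)
  have htcs : HasCompactSupport t := HasCompactSupport.of_support_subset_isCompact hχcs htsupp
  have ht1 : ContDiff ℝ 1 t := ht2.of_le (by norm_cast)
  have htdiff : Differentiable ℝ t := ht1.differentiable (by norm_cast)
  have hφdiff : Differentiable ℝ φ := hφ.differentiable (by norm_cast)
  -- the quotient ψ
  set ψ : EuclideanSpace ℝ (Fin d) → ℝ := fun x => φ x / t x with hψ
  have hψ0 : ∀ x ∉ K, ψ x = 0 := by
    intro x hx
    have : φ x = 0 := image_eq_zero_of_notMem_tsupport hx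
    simp only [hψ, this, zero_div]
  have hcov2 : {x : EuclideanSpace ℝ (Fin d) | t x ≠ 0} ∪ Kᶜ = univ := by
    apply eq_univ_of_forall; intro x
    by_cases hx : x ∈ K
    · exact Or.inl (ne_of_gt (htpos x (hKN hx)))
    · exact Or.inr hx
  have hto : IsOpen {x : EuclideanSpace ℝ (Fin d) | t x ≠ 0} := isOpen_ne.preimage ht2.continuous
  have hψ1 : ContDiff ℝ 1 ψ := by
    apply contDiff_of_open_cover hto (hKc.isClosed).isOpen_compl hcov2
    · exact (hφ.contDiffOn).div (ht1.contDiffOn) (fun x hx => hx)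
    · exact contDiffOn_const.congr fun x hx => hψ0 x hx
  have hψdiff : Differentiable ℝ ψ := hψ1.differentiable (by norm_cast)
  have hψsupp : support ψ ⊆ K := by
    intro x hx; by_contra h; exact hx (hψ0 x h)
  have hψcs : HasCompactSupport ψ := HasCompactSupport.of_support_subset_isCompact hKc hψsupp
  have hφeq : ∀ x, φ x = t x * ψ x := by
    intro x
    by_cases hx : t x = 0
    · have hxK : x ∉ K := fun h => (ne_of_gt (htpos x (hKN h))) hx
      rw [image_eq_zero_of_notMem_tsupport hxK, hx, zero_mul]
    · simp only [hψ]
      field_simp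
  -- product rule
  have hφfun : φ = fun x => t x * ψ x := funext hφeq
  have hder : ∀ x v, fderiv ℝ φ x v = ψ x * fderiv ℝ t x v + t x * fderiv ℝ ψ x v := by
    intro x v
    conv_lhs => rw [hφfun]
    rw [fderiv_fun_mul (htdiff x) (hψdiff x)]
    simp only [ContinuousLinearMap.add_apply, ContinuousLinearMap.smul_apply, smul_eq_mul]
    ring
  -- the test function ξ = t ψ²
  set ξ : EuclideanSpace ℝ (Fin d) → ℝ := fun x => t x * (ψ x * ψ x) with hξdef
  have hξ1 : ContDiff ℝ 1 ξ := ht1.mul (hψ1.mul hψ1)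
  have hξdiff : Differentiable ℝ ξ := hξ1.differentiable (by norm_cast)
  have hξder : ∀ x v, fderiv ℝ ξ x v
      = ψ x * ψ x * fderiv ℝ t x v + 2 * (t x * ψ x) * fderiv ℝ ψ x v := by
    intro x v
    have : fderiv ℝ ξ x = fderiv ℝ (fun y => t y * (ψ y * ψ y)) x := rfl
    rw [this, fderiv_fun_mul (htdiff x)
        (show DifferentiableAt ℝ (fun y => ψ y * ψ y) x from (hψdiff x).mul (hψdiff x)),
      fderiv_fun_mul (hψdiff x) (hψdiff x)]
    simp only [ContinuousLinearMap.add_apply, ContinuousLinearMap.smul_apply, smul_eq_mul]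
    ring
  have hξsupp : support ξ ⊆ K := by
    intro x hx
    by_contra h
    exact hx (by simp [hξdef, hψ0 x h])
  -- pointwise identity
  have hpt : ∀ x, ‖gradient φ x‖ ^ 2 - W x * φ x ^ 2
      = ((t x) ^ 2 * ∑ i, (fderiv ℝ ψ x (e i)) ^ 2)
        + ((∑ i, fderiv ℝ t x (e i) * fderiv ℝ ξ x (e i)) - W x * t x * ξ x) := by
    intro x
    rw [norm_gradient_sq]
    have h1 : ∑ i, (fderiv ℝ φ x (EuclideanSpace.single i 1)) ^ 2
        = (∑ i, (t x) ^ 2 * (fderiv ℝ ψ x (e i)) ^ 2)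
          + ∑ i, fderiv ℝ t x (e i) * fderiv ℝ ξ x (e i) := by
      rw [← Finset.sum_add_distrib]
      refine Finset.sum_congr rfl fun i _ => ?_
      rw [show (EuclideanSpace.single i (1:ℝ)) = e i from rfl, hder, hξder]
      ring
    rw [h1, ← Finset.mul_sum, hφeq x, hξdef]
    ring
  -- continuity of the derivatives involved
  have htd1 : ∀ i, ContDiff ℝ 1 (fun y => fderiv ℝ t y (e i)) := by
    intro i
    exact (ht2.fderiv_right (by norm_cast)).clm_apply contDiff_const
  have htdC : ∀ i, Continuous (fun y => fderiv ℝ t y (e i)) := fun i => (htd1 i).continuous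
  have htddC : ∀ i, Continuous (fun x => fderiv ℝ (fun y => fderiv ℝ t y (e i)) x (e i)) := by
    intro i
    exact ((htd1 i).continuous_fderiv one_ne_zero).clm_apply continuous_const
  have hψdC : ∀ i, Continuous (fun x => fderiv ℝ ψ x (e i)) := by
    intro i
    exact (hψ1.continuous_fderiv one_ne_zero).clm_apply continuous_const
  have hξdC : ∀ i, Continuous (fun x => fderiv ℝ ξ x (e i)) := by
    intro i
    exact (hξ1.continuous_fderiv one_ne_zero).clm_apply continuous_const
  -- integrability
  have key : ∀ f : EuclideanSpace ℝ (Fin d) → ℝ,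
      Continuous f → support f ⊆ K → Integrable f volume := by
    intro f hf hs
    exact hf.integrable_of_hasCompactSupport
      (HasCompactSupport.of_support_subset_isCompact hKc hs)
  have hψd_supp : ∀ i, support (fun x => fderiv ℝ ψ x (e i)) ⊆ K := by
    intro i x hx
    have h1 : fderiv ℝ ψ x ≠ 0 := fun h => hx (by simp [h])
    have h2 : x ∈ tsupport ψ := support_fderiv_subset ℝ (by simpa [mem_support] using h1)
    exact (closure_minimal hψsupp hKc.isClosed) h2
  have hInt1 : Integrable (fun x => (t x) ^ 2 * ∑ i, (fderiv ℝ ψ x (e i)) ^ 2) volume := by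
    apply key
    · exact (ht2.continuous.pow 2).mul (continuous_finset_sum _ fun i _ => (hψdC i).pow 2)
    · intro x hx
      have h2 : ∑ i, (fderiv ℝ ψ x (e i)) ^ 2 ≠ 0 := right_ne_zero_of_mul hx
      obtain ⟨i, -, hi⟩ := Finset.exists_ne_zero_of_sum_ne_zero h2
      exact hψd_supp i (fun h => hi (by simp only [mem_support] at h ⊢; simp [h]))
  have hξd_supp : ∀ i, support (fun x => fderiv ℝ ξ x (e i)) ⊆ K := by
    intro i x hx
    have h1 : fderiv ℝ ξ x ≠ 0 := fun h => hx (by simp [h])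
    have h2 : x ∈ tsupport ξ := support_fderiv_subset ℝ (by simpa [mem_support] using h1)
    exact (closure_minimal hξsupp hKc.isClosed) h2
  have hInt2 : ∀ i, Integrable (fun x => fderiv ℝ t x (e i) * fderiv ℝ ξ x (e i)) volume := by
    intro i
    apply key _ ((htdC i).mul (hξdC i))
    intro x hx
    exact hξd_supp i fun h => (right_ne_zero_of_mul hx) h
  have hInt3 : ∀ i, Integrable
      (fun x => fderiv ℝ (fun y => fderiv ℝ t y (e i)) x (e i) * ξ x) volume := by
    intro i
    apply key _ ((htddC i).mul hξ1.continuous)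
    intro x hx
    exact hξsupp fun h => (right_ne_zero_of_mul hx) h
  have hIntfg : ∀ i, Integrable (fun x => fderiv ℝ t x (e i) * ξ x) volume := by
    intro i
    apply key _ ((htdC i).mul hξ1.continuous)
    intro x hx
    exact hξsupp fun h => (right_ne_zero_of_mul hx) h
  have hIntWtξ : Integrable (fun x => W x * t x * ξ x) volume := by
    apply key _ ((hWc.mul ht2.continuous).mul hξ1.continuous)
    intro x hx
    exact hξsupp fun h => (right_ne_zero_of_mul hx) h
  -- integration by parts
  have hibp : ∀ i, ∫ x, fderiv ℝ t x (e i) * fderiv ℝ ξ x (e i)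
      = - ∫ x, fderiv ℝ (fun y => fderiv ℝ t y (e i)) x (e i) * ξ x := by
    intro i
    exact integral_mul_fderiv_eq_neg_fderiv_mul_of_integrable (hInt3 i) (hInt2 i) (hIntfg i)
      (fun x _ => (htd1 i).differentiable (by norm_cast) x) (fun x _ => hξdiff x)
  -- the two main integrals
  set A : ℝ := ∫ x, (t x) ^ 2 * ∑ i, (fderiv ℝ ψ x (e i)) ^ 2 with hAdef
  set B : ℝ := ∫ x, (-(∑ i, fderiv ℝ (fun y => fderiv ℝ t y (e i)) x (e i)) - W x * t x) * ξ x
    with hBdef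
  have hIntB : Integrable (fun x =>
      (-(∑ i, fderiv ℝ (fun y => fderiv ℝ t y (e i)) x (e i)) - W x * t x) * ξ x) volume := by
    apply key _ (((continuous_finset_sum _ fun i _ => htddC i).neg.sub
      (hWc.mul ht2.continuous)).mul hξ1.continuous)
    intro x hx
    exact hξsupp fun h => (right_ne_zero_of_mul hx) h
  -- the main integral identity
  have hQ : (∫ x in Ω, (‖gradient φ x‖ ^ 2 - V x * φ x ^ 2)) = A + B := by
    have e1 : (∫ x in Ω, (‖gradient φ x‖ ^ 2 - V x * φ x ^ 2))
        = ∫ x in Ω, (‖gradient φ x‖ ^ 2 - W x * φ x ^ 2) := by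
      apply setIntegral_congr_fun hΩ.measurableSet
      intro x hx
      by_cases hφx : φ x = 0
      · simp [hφx]
      · have hxN : x ∈ N := hKN (subset_closure (by simpa [mem_support] using hφx))
        dsimp only
        rw [hWV x hxN]
    have e2 : (∫ x in Ω, (‖gradient φ x‖ ^ 2 - W x * φ x ^ 2))
        = ∫ x, (‖gradient φ x‖ ^ 2 - W x * φ x ^ 2) := by
      apply setIntegral_eq_integral_of_forall_compl_eq_zero
      intro x hx
      have hxK : x ∉ K := fun h => hx (hφΩ h)
      have hφx : φ x = 0 := image_eq_zero_of_notMem_tsupport hxK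
      have hfd : fderiv ℝ φ x = 0 := by
        by_contra h
        exact hxK (support_fderiv_subset ℝ (by simpa [mem_support] using h))
      have hgrad : gradient φ x = 0 := by simp [gradient, hfd]
      simp [hφx, hgrad]
    rw [e1, e2]
    have e3 : (∫ x, (‖gradient φ x‖ ^ 2 - W x * φ x ^ 2))
        = ∫ x, (((t x) ^ 2 * ∑ i, (fderiv ℝ ψ x (e i)) ^ 2)
          + ((∑ i, fderiv ℝ t x (e i) * fderiv ℝ ξ x (e i)) - W x * t x * ξ x)) := by
      exact integral_congr_ae (Eventually.of_forall hpt)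
    have hIntS : Integrable
        (fun x => ∑ i, fderiv ℝ t x (e i) * fderiv ℝ ξ x (e i)) volume := by
      apply integrable_finset_sum _ fun i _ => hInt2 i
    have hIntG : Integrable (fun x =>
        (∑ i, fderiv ℝ t x (e i) * fderiv ℝ ξ x (e i)) - W x * t x * ξ x) volume :=
      hIntS.sub hIntWtξ
    rw [e3, integral_add hInt1 hIntG]
    congr 1
    rw [integral_sub hIntS hIntWtξ,
      integral_finset_sum _ fun i _ => hInt2 i,
      Finset.sum_congr rfl fun i _ => hibp i, hBdef]
    have e4 : (fun x => (-(∑ i, fderiv ℝ (fun y => fderiv ℝ t y (e i)) x (e i)) - W x * t x) * ξ x)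
        = fun x => (-(∑ i, fderiv ℝ (fun y => fderiv ℝ t y (e i)) x (e i) * ξ x))
            - W x * t x * ξ x := by
      funext x
      rw [sub_mul, neg_mul, Finset.sum_mul]
    have hIntS3 : Integrable
        (fun x => ∑ i, fderiv ℝ (fun y => fderiv ℝ t y (e i)) x (e i) * ξ x) volume := by
      apply integrable_finset_sum _ fun i _ => hInt3 i
    have hIntS3' : Integrable
        (fun x => -(∑ i, fderiv ℝ (fun y => fderiv ℝ t y (e i)) x (e i) * ξ x)) volume :=
      hIntS3.neg
    rw [e4, integral_sub hIntS3' hIntWtξ, integral_neg,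
      integral_finset_sum _ fun i _ => hInt3 i]
    simp

  have hA : 0 ≤ A := integral_nonneg fun x => by positivity
  have hBpt : ∀ x, 0 ≤ (-(∑ i, fderiv ℝ (fun y => fderiv ℝ t y (e i)) x (e i))
      - W x * t x) * ξ x := by
    intro x
    by_cases hx : ψ x = 0
    · simp [hξdef, hx]
    · have hxN : x ∈ N := hKN (closure_minimal hψsupp hKc.isClosed
        (subset_closure (by simpa [mem_support] using hx)))
      have hteq : ∀ i : Fin d, fderiv ℝ (fun y => fderiv ℝ t y (e i)) x (e i)
          = fderiv ℝ (fun y => fderiv ℝ u y (EuclideanSpace.single i 1)) x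
              (EuclideanSpace.single i 1) := by
        intro i
        have h1 : (fun y => fderiv ℝ t y (e i))
            =ᶠ[𝓝 x] (fun y => fderiv ℝ u y (EuclideanSpace.single i 1)) := by
          filter_upwards [hNo.mem_nhds hxN] with y hy
          have h2 : t =ᶠ[𝓝 y] u := eventuallyEq_of_mem (hNo.mem_nhds hy) htu
          rw [show e i = EuclideanSpace.single i (1:ℝ) from rfl, h2.fderiv_eq]
        rw [h1.fderiv_eq]
      have hsup := hsuper x (hNΩ hxN)
      have h3 : 0 ≤ -(∑ i, fderiv ℝ (fun y => fderiv ℝ t y (e i)) x (e i)) - W x * t x := by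
        rw [Finset.sum_congr rfl fun i _ => hteq i, hWV x hxN, htu x hxN]
        linarith
      apply mul_nonneg h3
      rw [hξdef]
      dsimp only
      rw [htu x hxN]
      exact mul_nonneg (le_of_lt (hupos x (hNΩ hxN))) (mul_self_nonneg _)
  have hB : 0 ≤ B := integral_nonneg hBpt
  constructor
  · rw [hQ]; exact add_nonneg hA hB
  constructor
  · intro h0
    have hA0 : A = 0 := le_antisymm (by rw [hQ] at h0; linarith) hA
    have hF₁ : (fun x => (t x) ^ 2 * ∑ i, (fderiv ℝ ψ x (e i)) ^ 2) = fun _ => (0:ℝ) := by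
      rw [← (show Continuous (fun x => (t x) ^ 2 * ∑ i, (fderiv ℝ ψ x (e i)) ^ 2) from
          (ht2.continuous.pow 2).mul
          (continuous_finset_sum _ fun i _ => (hψdC i).pow 2)).ae_eq_iff_eq volume
          continuous_const]
      exact (integral_eq_zero_iff_of_nonneg (fun x => by positivity) hInt1).mp hA0
    have hfd0 : ∀ x, fderiv ℝ ψ x = 0 := by
      intro x
      by_cases hx : t x = 0
      · have hxK : x ∉ K := fun h => (ne_of_gt (htpos x (hKN h))) hx
        have hev : ψ =ᶠ[𝓝 x] (fun _ => 0) :=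
          eventuallyEq_of_mem (hKc.isClosed.isOpen_compl.mem_nhds hxK) (fun y hy => hψ0 y hy)
        rw [hev.fderiv_eq]
        exact fderiv_const_apply 0
      · have h1 := congrFun hF₁ x
        rcases mul_eq_zero.mp h1 with h | h2
        · exact absurd h (pow_ne_zero _ hx)
        apply clm_eq_zero_of_single
        intro i
        have h4 := (Finset.sum_eq_zero_iff_of_nonneg
          (fun i _ => sq_nonneg (fderiv ℝ ψ x (e i)))).mp h2 i (Finset.mem_univ i)
        exact pow_eq_zero_iff two_ne_zero |>.mp h4
    have hconst : ∀ x y, ψ x = ψ y := fun x y => is_const_of_fderiv_eq_zero hψdiff hfd0 x y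
    haveI : Nontrivial (EuclideanSpace ℝ (Fin d)) :=
      ⟨⟨EuclideanSpace.single ⟨0, hd⟩ 1, 0, fun h => by
        have h5 := congrArg (fun v => v ⟨0, hd⟩) h
        simp [EuclideanSpace.single_apply] at h5⟩⟩
    obtain ⟨y, hy⟩ : ∃ y, y ∉ tsupport ψ := by
      by_contra h
      push_neg at h
      exact IsCompact.ne_univ hψcs (eq_univ_of_forall h)
    intro x
    rw [hφeq x, hconst x y, image_eq_zero_of_notMem_tsupport hy, mul_zero]
  · intro h
    have hz : ∀ x, ‖gradient φ x‖ ^ 2 - V x * φ x ^ 2 = 0 := by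
      intro x
      have hφ0 : φ = fun _ => (0:ℝ) := funext h
      rw [hφ0]
      simp [gradient_const]
    have hzz : (∫ x in Ω, (‖gradient φ x‖ ^ 2 - V x * φ x ^ 2))
        = ∫ x in Ω, (0:ℝ) := integral_congr_ae (Eventually.of_forall fun x => hz x)
    rw [hzz, integral_zero]
end
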